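/- Let E = {(x,y) : y³ = 1 - x², x ∈ [-1/2,-1/4] ∪ [1/4,1/2]} ⊂ ℝ². Then E is not a 𝒫(x)⊗𝒫₂(y)-Markov set: there do not exist constants M, m > 0 such that ‖D^α P‖_E ≤ M^{|α|}(deg P)^{m|α|}‖P‖_E for all P ∈ 𝒫(x)⊗𝒫₂(y) and all α. -/

import Mathlib

open MvPolynomial

/-- The compact set `E = {(x,y) : y³ = 1-x², x ∈ [-1/2,-1/4] ∪ [1/4,1/2]}`. -/
def E12 : Set (ℝ × ℝ) :=
  {p | p.2 ^ 3 = 1 - p.1 ^ 2 ∧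
    p.1 ∈ Set.Icc (-(1:ℝ)/2) (-(1:ℝ)/4) ∪ Set.Icc ((1:ℝ)/4) ((1:ℝ)/2)}


open Finset Filter

noncomputable def aSeq : ℕ → ℝ
  | 0 => 1
  | (k+1) => aSeq k * ((k:ℝ) - 1/3) / ((k:ℝ)+1)

lemma aSeq_abs_le_one (k : ℕ) : |aSeq k| ≤ 1 := by
  induction k with
  | zero => simp [aSeq]
  | succ k ih =>
    have hk : |((k:ℝ) - 1/3)| ≤ (k:ℝ) + 1 := by
      rw [abs_le]; constructor <;> nlinarith [Nat.cast_nonneg (α := ℝ) k]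
    have h1 : (0:ℝ) < (k:ℝ) + 1 := by positivity
    rw [aSeq, abs_div, abs_mul, abs_of_pos h1, div_le_one h1]
    calc |aSeq k| * |(k:ℝ) - 1/3| ≤ 1 * ((k:ℝ)+1) :=
      mul_le_mul ih hk (abs_nonneg _) zero_le_one
    _ = (k:ℝ) + 1 := one_mul _

lemma aSeq_rec (k : ℕ) : ((k:ℝ)+1) * aSeq (k+1) = ((k:ℝ) - 1/3) * aSeq k := by
  have h1 : ((k:ℝ) + 1) ≠ 0 := by positivity
  rw [aSeq]; field_simp

noncomputable def Sfun (n : ℕ) (t : ℝ) : ℝ := ∑ k ∈ Finset.range (n+1), aSeq k * t ^ k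

lemma key_ident (n : ℕ) (s : ℝ) :
    (∑ k ∈ Finset.range (n+1), aSeq k * ((k:ℝ) * s ^ (k-1))) * (1 - s)
      + (1/3) * Sfun n s = -((n:ℝ) - 1/3) * aSeq n * s ^ n := by
  induction n with
  | zero => simp [Sfun]
  | succ n ih =>
    have hS : Sfun (n+1) s = Sfun n s + aSeq (n+1) * s^(n+1) := Finset.sum_range_succ _ _
    have hD : ∑ k ∈ Finset.range (n+2), aSeq k * ((k:ℝ) * s ^ (k-1))
        = (∑ k ∈ Finset.range (n+1), aSeq k * ((k:ℝ) * s ^ (k-1)))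
          + aSeq (n+1) * (((n:ℝ)+1) * s ^ n) := by
      rw [Finset.sum_range_succ]; push_cast; norm_num
    have hrec := aSeq_rec n
    rw [show n + 1 + 1 = n + 2 from rfl, hD, hS]
    push_cast
    linear_combination ih + s ^ n * hrec

lemma g_hasDerivAt (n : ℕ) (s : ℝ) (hs : s < 1) :
    HasDerivAt (fun s => Sfun n s * (1 - s) ^ (-(1/3) : ℝ))
      (-((n:ℝ) - 1/3) * aSeq n * s ^ n * (1 - s) ^ (-(4/3) : ℝ)) s := by
  have h1 : (0:ℝ) < 1 - s := by linarith
  have hS : HasDerivAt (fun s => Sfun n s)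
      (∑ k ∈ Finset.range (n+1), aSeq k * ((k:ℝ) * s ^ (k-1))) s := by
    unfold Sfun
    exact HasDerivAt.fun_sum fun k _ => (hasDerivAt_pow k s).const_mul (aSeq k)
  have hR := (HasDerivAt.const_sub 1 (hasDerivAt_id s)).rpow_const
    (p := (-(1/3) : ℝ)) (Or.inl h1.ne')
  simp only [id_eq] at hR
  have := hS.mul hR
  refine this.congr_deriv ?_
  have e1 : ((-(1/3) : ℝ) - 1) = (-(4/3) : ℝ) := by norm_num
  have e2 : (1 - s) ^ (-(1/3) : ℝ) = (1 - s) ^ (-(4/3) : ℝ) * (1 - s) := by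
    rw [← Real.rpow_add_one h1.ne']
    norm_num
  rw [e1, e2]
  linear_combination ((1 - s) ^ (-(4/3) : ℝ)) * key_ident n s

lemma approx (n : ℕ) (t : ℝ) (ht : t ∈ Set.Icc (0:ℝ) (1/4)) :
    |(1 - t) ^ ((1/3) : ℝ) - Sfun n t| ≤ ((n:ℝ)+1) * (1/4) ^ n := by
  obtain ⟨ht0, ht4⟩ := ht
  set g : ℝ → ℝ := fun s => Sfun n s * (1 - s) ^ (-(1/3) : ℝ) with hg
  set K : ℝ := ((n:ℝ)+1) * (1/4) ^ n * 2 with hK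
  have hbound : ∀ s ∈ Set.Icc (0:ℝ) (1/4),
      ‖-((n:ℝ) - 1/3) * aSeq n * s ^ n * (1 - s) ^ (-(4/3) : ℝ)‖ ≤ K := by
    intro s ⟨hs0, hs4⟩
    have h34 : (0:ℝ) < 1 - s := by linarith
    have hr : (1 - s) ^ (-(4/3) : ℝ) ≤ 2 := by
      have h1 : (1 - s) ^ (-(4/3) : ℝ) ≤ ((3:ℝ)/4) ^ (-(4/3) : ℝ) := by
        apply Real.rpow_le_rpow_of_nonpos (by norm_num) (by linarith) (by norm_num)
      have h2 : ((3:ℝ)/4) ^ (-(4/3) : ℝ) ≤ 2 := by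
        rw [Real.rpow_neg (by norm_num)]
        rw [show (2:ℝ) = ((1:ℝ)/2)⁻¹ by norm_num]
        apply inv_anti₀ (by norm_num)
        calc ((1:ℝ)/2) ≤ ((3:ℝ)/4) ^ (2:ℕ) := by norm_num
        _ = ((3:ℝ)/4) ^ ((2:ℕ):ℝ) := (Real.rpow_natCast _ 2).symm
        _ ≤ ((3:ℝ)/4) ^ ((4:ℝ)/3) := by
            apply Real.rpow_le_rpow_of_exponent_ge (by norm_num) (by norm_num) (by norm_num)
      linarith
    have hrpos : (0:ℝ) ≤ (1 - s) ^ (-(4/3) : ℝ) := Real.rpow_nonneg (by linarith) _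
    rw [Real.norm_eq_abs, abs_mul, abs_of_nonneg hrpos]
    have h3 : |(-((n:ℝ) - 1/3)) * aSeq n * s ^ n| ≤ ((n:ℝ)+1) * (1/4)^n := by
      rw [abs_mul, abs_mul]
      have c1 : |(-((n:ℝ) - 1/3))| ≤ (n:ℝ)+1 := by
        rw [abs_le]; constructor <;> nlinarith [Nat.cast_nonneg (α := ℝ) n]
      have c2 : |aSeq n| ≤ 1 := aSeq_abs_le_one n
      have c3 : |s ^ n| ≤ (1/4)^n := by
        rw [abs_pow]
        exact pow_le_pow_left₀ (abs_nonneg s) (by rw [abs_of_nonneg hs0]; linarith) n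
      calc |(-((n:ℝ) - 1/3))| * |aSeq n| * |s ^ n| ≤ (((n:ℝ)+1) * 1) * (1/4)^n := by
            apply mul_le_mul _ c3 (abs_nonneg _) (by positivity)
            exact mul_le_mul c1 c2 (abs_nonneg _) (by positivity)
      _ = ((n:ℝ)+1) * (1/4)^n := by ring
    calc |(-((n:ℝ) - 1/3)) * aSeq n * s ^ n| * (1 - s) ^ (-(4/3) : ℝ)
        ≤ (((n:ℝ)+1) * (1/4)^n) * 2 := by
          apply mul_le_mul h3 hr hrpos (by positivity)
    _ = K := rfl
  have hmvt := Convex.norm_image_sub_le_of_norm_hasDerivWithin_le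
    (f := g) (f' := fun s => -((n:ℝ) - 1/3) * aSeq n * s ^ n * (1 - s) ^ (-(4/3) : ℝ))
    (fun s hs => (g_hasDerivAt n s (by linarith [hs.2])).hasDerivWithinAt)
    hbound (convex_Icc _ _) (Set.left_mem_Icc.2 (by norm_num)) ⟨ht0, ht4⟩
  have hg0 : g 0 = 1 := by
    have : Sfun n 0 = 1 := by
      unfold Sfun
      rw [Finset.sum_eq_single 0]
      · simp [aSeq]
      · intro k _ hk; simp [zero_pow hk]
      · intro h; simp at h
    simp [hg, this]
  have ht1 : (0:ℝ) < 1 - t := by linarith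
  have hfact : Sfun n t = g t * (1 - t) ^ ((1/3) : ℝ) := by
    simp only [hg]
    rw [mul_assoc, ← Real.rpow_add ht1]
    norm_num
  have hle1 : (1 - t) ^ ((1/3) : ℝ) ≤ 1 :=
    Real.rpow_le_one (by linarith) (by linarith) (by norm_num)
  have hpos : (0:ℝ) ≤ (1 - t) ^ ((1/3) : ℝ) := Real.rpow_nonneg (by linarith) _
  have heq : (1 - t) ^ ((1/3) : ℝ) - Sfun n t = (1 - g t) * (1 - t) ^ ((1/3) : ℝ) := by
    rw [hfact]; ring
  rw [heq, abs_mul, abs_of_nonneg hpos]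
  have hgt : |1 - g t| ≤ K * (1/4) := by
    have : ‖g t - g 0‖ ≤ K * ‖t - 0‖ := hmvt
    rw [Real.norm_eq_abs, Real.norm_eq_abs, sub_zero, abs_of_nonneg ht0, hg0] at this
    calc |1 - g t| = |g t - 1| := abs_sub_comm _ _
    _ ≤ K * t := this
    _ ≤ K * (1/4) := by
        apply mul_le_mul_of_nonneg_left ht4 (by positivity)
  calc |1 - g t| * (1 - t) ^ ((1/3) : ℝ) ≤ (K * (1/4)) * 1 :=
      mul_le_mul hgt hle1 hpos (by positivity)
  _ ≤ ((n:ℝ)+1) * (1/4) ^ n := by rw [hK]; ring_nf; nlinarith [pow_nonneg (by norm_num : (0:ℝ) ≤ 1/4) n]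

noncomputable def Pn (n : ℕ) : MvPolynomial (Fin 2) ℝ :=
  X 1 + ∑ k ∈ Finset.range (n+1), C (-(aSeq k)) * X 0 ^ (2*k)

lemma eval_Pn (n : ℕ) (x y : ℝ) : eval ![x,y] (Pn n) = y - Sfun n (x^2) := by
  simp [Pn, Sfun, Finset.mul_sum, pow_mul, sub_eq_add_neg, ← Finset.sum_neg_distrib]

lemma degreeOf_Pn (n : ℕ) : (Pn n).degreeOf 1 ≤ 2 := by
  unfold Pn
  refine le_trans (degreeOf_add_le _ _ _) ?_
  have h1 : degreeOf 1 (X (R := ℝ) (1 : Fin 2)) ≤ 1 := by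
    rw [degreeOf_X]
    simp
  have h2 : degreeOf 1 (∑ k ∈ Finset.range (n+1), C (-(aSeq k)) * X (0 : Fin 2) ^ (2*k) : MvPolynomial (Fin 2) ℝ) = 0 := by
    apply Nat.le_zero.1
    apply le_trans (degreeOf_sum_le _ _ _)
    apply Finset.sup_le
    intro k _
    refine le_trans (degreeOf_mul_le _ _ _) ?_
    rw [degreeOf_C]
    refine le_trans (by simpa using degreeOf_pow_le (1 : Fin 2) (X (0 : Fin 2)) (2*k)) ?_
    rw [degreeOf_X]
    simp
  omega

lemma totalDegree_Pn (n : ℕ) : (Pn n).totalDegree ≤ 2*n+1 := by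
  unfold Pn
  refine le_trans (totalDegree_add _ _) ?_
  apply max_le
  · simp [totalDegree_X]
  · refine le_trans (totalDegree_finset_sum _ _) ?_
    apply Finset.sup_le
    intro k hk
    refine le_trans (totalDegree_mul _ _) ?_
    rw [totalDegree_C, totalDegree_X_pow]
    simp at hk
    omega

lemma pderiv_Pn (n : ℕ) : pderiv (1 : Fin 2) (Pn n) = 1 := by
  unfold Pn
  rw [map_add, map_sum]
  simp [pderiv_X, Pi.single_apply]

lemma E12_facts (p : ℝ × ℝ) (hp : p ∈ E12) :
    p.1 ^ 2 ∈ Set.Icc (0:ℝ) (1/4) ∧ p.2 = (1 - p.1 ^ 2) ^ ((1/3) : ℝ) := by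
  obtain ⟨hy, hx⟩ := hp
  have hx2 : p.1 ^ 2 ∈ Set.Icc (0:ℝ) (1/4) := by
    constructor
    · positivity
    · rcases hx with ⟨h1, h2⟩ | ⟨h1, h2⟩ <;> nlinarith
  refine ⟨hx2, ?_⟩
  have h34 : (0:ℝ) < 1 - p.1 ^ 2 := by
    have := hx2.2; linarith
  have hy3 : 0 < p.2 ^ 3 := by rw [hy]; exact h34
  have hypos : 0 < p.2 := by
    by_contra h
    push_neg at h
    have : p.2 ^ 3 ≤ 0 := Odd.pow_nonpos (by decide) h
    linarith
  rw [← hy, ← Real.rpow_natCast p.2 3, ← Real.rpow_mul hypos.le]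
  norm_num

lemma p0_mem : ((1:ℝ)/2, ((3:ℝ)/4) ^ ((1/3) : ℝ)) ∈ E12 := by
  constructor
  · show (((3:ℝ)/4) ^ ((1/3) : ℝ)) ^ 3 = 1 - ((1:ℝ)/2) ^ 2
    rw [← Real.rpow_natCast (((3:ℝ)/4) ^ ((1/3) : ℝ)) 3, ← Real.rpow_mul (by norm_num)]
    norm_num
  · right
    constructor <;> norm_num


/-- `E` is not a `𝒫(x)⊗𝒫₂(y)`-Markov set: there are no `M, m > 0` such that
`‖D^α P‖_E ≤ M^{|α|} (deg P)^{m|α|} ‖P‖_E` for all `P ∈ 𝒫(x)⊗𝒫₂(y)` and all `α`. -/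
theorem E12_not_Markov :
    ¬ ∃ M m : ℝ, 0 < M ∧ 0 < m ∧
      ∀ P : MvPolynomial (Fin 2) ℝ, P.degreeOf 1 ≤ 2 →
        ∀ α : Fin 2 → ℕ, ∀ C : ℝ,
          (∀ p ∈ E12, |eval ![p.1, p.2] P| ≤ C) →
          ∀ p ∈ E12,
            |eval ![p.1, p.2] ((pderiv (0 : Fin 2))^[α 0] ((pderiv (1 : Fin 2))^[α 1] P))|
              ≤ M ^ (α 0 + α 1) * ((P.totalDegree : ℝ)) ^ (m * ((α 0 + α 1 : ℕ) : ℝ)) * C := by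
  rintro ⟨M, m, hM, hm, H⟩
  have key : ∀ n : ℕ, (1:ℝ) ≤ M * ((2*(n:ℝ)+1)) ^ (m:ℝ) * (((n:ℝ)+1) * (1/4)^n) := by
    intro n
    have hb : ∀ p ∈ E12, |eval ![p.1, p.2] (Pn n)| ≤ ((n:ℝ)+1) * (1/4)^n := by
      intro p hp
      obtain ⟨hx2, hy⟩ := E12_facts p hp
      rw [eval_Pn, hy]
      exact approx n _ hx2
    have h := H (Pn n) (degreeOf_Pn n) ![0,1] _ hb _ p0_mem
    simp only [Matrix.cons_val_zero, Matrix.cons_val_one, Matrix.head_cons,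
      Function.iterate_one, Function.iterate_zero, id_eq, pderiv_Pn] at h
    simp only [map_one, abs_one, pow_one] at h
    norm_num at h
    have hD : ((Pn n).totalDegree : ℝ) ^ (m:ℝ) ≤ ((2*(n:ℝ)+1)) ^ (m:ℝ) := by
      apply Real.rpow_le_rpow (Nat.cast_nonneg _) _ hm.le
      have := totalDegree_Pn n
      push_cast
      exact_mod_cast this
    calc (1:ℝ) ≤ M * ((Pn n).totalDegree : ℝ) ^ (m:ℝ) * (((n:ℝ)+1) * (1/4)^n) := h
    _ ≤ M * ((2*(n:ℝ)+1)) ^ (m:ℝ) * (((n:ℝ)+1) * (1/4)^n) := by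
        have : (0:ℝ) ≤ ((n:ℝ)+1) * (1/4)^n := by positivity
        gcongr
  -- asymptotics
  set d : ℕ := ⌈m⌉₊ with hd
  have hbound : ∀ n : ℕ, M * ((2*(n:ℝ)+1)) ^ (m:ℝ) * (((n:ℝ)+1) * (1/4)^n)
      ≤ (M * 2^d * 4) * ((((n+1:ℕ)):ℝ)^(d+1) * (1/4)^(n+1)) := by
    intro n
    have h1 : ((2*(n:ℝ)+1)) ^ (m:ℝ) ≤ (2*(n:ℝ)+2) ^ (d:ℕ) := by
      calc ((2*(n:ℝ)+1)) ^ (m:ℝ) ≤ (2*(n:ℝ)+2) ^ (m:ℝ) := by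
            apply Real.rpow_le_rpow (by positivity) (by linarith) hm.le
      _ ≤ (2*(n:ℝ)+2) ^ ((d:ℕ):ℝ) := by
            apply Real.rpow_le_rpow_of_exponent_le (by linarith [Nat.cast_nonneg (α := ℝ) n])
            exact Nat.le_ceil m
      _ = (2*(n:ℝ)+2) ^ (d:ℕ) := Real.rpow_natCast _ _
    have h2 : (2*(n:ℝ)+2) ^ (d:ℕ) = 2^d * ((n:ℝ)+1)^d := by
      rw [← mul_pow]; ring_nf
    have hnn : (0:ℝ) ≤ ((n:ℝ)+1) * (1/4)^n := by positivity
    calc M * ((2*(n:ℝ)+1)) ^ (m:ℝ) * (((n:ℝ)+1) * (1/4)^n)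
        ≤ M * (2^d * ((n:ℝ)+1)^d) * (((n:ℝ)+1) * (1/4)^n) := by
          rw [← h2]; gcongr
    _ = (M * 2^d * 4) * ((((n+1:ℕ)):ℝ)^(d+1) * (1/4)^(n+1)) := by
          push_cast; ring
  have htend : Tendsto (fun k : ℕ => ((k:ℝ))^(d+1) * (1/4)^k) atTop (nhds 0) :=
    (summable_pow_mul_geometric_of_norm_lt_one (d+1)
      (r := (1/4:ℝ)) (by rw [Real.norm_eq_abs, abs_of_pos] <;> norm_num)).tendsto_atTop_zero
  have htend2 : Tendsto (fun n : ℕ => (M * 2^d * 4) * ((((n+1:ℕ)):ℝ)^(d+1) * (1/4)^(n+1)))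
      atTop (nhds 0) := by
    have := (htend.comp (tendsto_add_atTop_nat 1)).const_mul (M * 2^d * 4)
    simpa using this
  have := (htend2.eventually_lt_const (by norm_num : (0:ℝ) < 1)).exists
  obtain ⟨n, hn⟩ := this
  exact absurd (le_trans (key n) (hbound n)) (not_le.2 hn)
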